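/- Let q be a prime power, let G ∈ F_q^{k×n} be a matrix of rank k with columns g_1,…,g_n, and let s_1, s_2 ≥ 1 with s_1 + s_2 = k. For i ∈ {1,2}, let N(F_{3−i}) denote the number of column indices j with g_j ∈ F_{3−i}. Then E_i(G) ≥ n·s_i/(n − N(F_{3−i})). -/

import Mathlib

open Finset

/-- The `r`-th harmonic number `H_r = ∑_{i=1}^r 1/i`, as a real number (`H_0 = 0`). -/
noncomputable def harm (r : ℕ) : ℝ := ∑ i ∈ Finset.range r, (1 : ℝ) / (i + 1)

/-- The span of the columns of `G` indexed by the subset `S ⊆ {1,…,n}`. -/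
noncomputable def colSpan (F : Type*) [Field F] {k n : ℕ}
    (G : Matrix (Fin k) (Fin n) F) (S : Finset (Fin n)) : Submodule F (Fin k → F) :=
  Submodule.span F ((fun j => fun i => G i j) '' (S : Set (Fin n)))

/-- `α_V(s)`: the number of `s`-element subsets `S ⊆ {1,…,n}` whose columns span a
subspace containing the target subspace `V`. -/
noncomputable def alphaCount (F : Type*) [Field F] {k n : ℕ}
    (G : Matrix (Fin k) (Fin n) F) (V : Submodule F (Fin k → F)) (s : ℕ) : ℕ :=
  Nat.card {S : Finset (Fin n) // S.card = s ∧ V ≤ colSpan F G S}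

/-- The first file subspace `F₁ = span(e_1, …, e_{s₁}) ⊆ F_q^k`. -/
noncomputable def file1 (F : Type*) [Field F] (k s1 : ℕ) : Submodule F (Fin k → F) :=
  Submodule.span F {v : Fin k → F | ∃ i : Fin k, (i : ℕ) < s1 ∧ v = Pi.single i 1}

/-- The second file subspace `F₂ = span(e_{s₁+1}, …, e_k) ⊆ F_q^k`. -/
noncomputable def file2 (F : Type*) [Field F] (k s1 : ℕ) : Submodule F (Fin k → F) :=
  Submodule.span F {v : Fin k → F | ∃ i : Fin k, s1 ≤ (i : ℕ) ∧ v = Pi.single i 1}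

/-- The expected retrieval time `E(G, V) = n·H_n − ∑_{s=1}^{n−1} α_V(s)/C(n−1,s)`. -/
noncomputable def Etime (F : Type*) [Field F] {k n : ℕ}
    (G : Matrix (Fin k) (Fin n) F) (V : Submodule F (Fin k → F)) : ℝ :=
  (n : ℝ) * harm n -
    ∑ s ∈ Finset.Icc 1 (n - 1), (alphaCount F G V s : ℝ) / ((n - 1).choose s : ℝ)

/-- `N(W)`: the number of columns of `G` contained in the subspace `W`. -/
noncomputable def Ncount (F : Type*) [Field F] {k n : ℕ}
    (G : Matrix (Fin k) (Fin n) F) (W : Submodule F (Fin k → F)) : ℕ :=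
  Nat.card {j : Fin n // (fun i => G i j) ∈ W}

/-! ### Auxiliary lemmas -/

lemma choose_pos_cast {a b : ℕ} (h : b ≤ a) : (0:ℝ) < (a.choose b : ℝ) := by
  exact_mod_cast Nat.choose_pos h

lemma pascal_sum (b : ℕ) (g : ℕ → ℝ) :
    ∑ j ∈ range (b+2), ((b+1).choose j : ℝ) * g j
      = ∑ j ∈ range (b+1), (b.choose j : ℝ) * g j
        + ∑ j ∈ range (b+1), (b.choose j : ℝ) * g (j+1) := by
  rw [Finset.sum_range_succ' (fun j => ((b+1).choose j : ℝ) * g j) (b+1)]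
  have h1 : ∑ i ∈ range (b+1), ((b+1).choose (i+1) : ℝ) * g (i+1)
      = ∑ i ∈ range (b+1), ((b.choose i : ℝ) * g (i+1) + (b.choose (i+1) : ℝ) * g (i+1)) := by
    refine Finset.sum_congr rfl fun i _ => ?_
    rw [Nat.choose_succ_succ b i]
    push_cast; ring
  rw [h1, Finset.sum_add_distrib]
  rw [Finset.sum_range_succ (fun i => ((b).choose (i+1) : ℝ) * g (i+1)) b]
  rw [Nat.choose_succ_self]
  rw [Finset.sum_range_succ' (fun j => ((b).choose j : ℝ) * g j) b]
  simp
  ring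

lemma key_identity (b : ℕ) : ∀ m t : ℕ, t < m →
    ∑ j ∈ Finset.range (b+1), ((m.choose t : ℝ) * (b.choose j)) / ((m + b - 1).choose (t + j))
      = (m + b : ℝ) / ((m : ℝ) - t) := by
  induction b with
  | zero =>
    intro m t ht
    simp only [Finset.sum_range_one, Nat.choose_zero_right, Nat.cast_one, mul_one, Nat.add_zero,
      Nat.choose_self, zero_add, Nat.cast_zero, add_zero]
    have h1 : (m-1).choose t * ((m-1) + 1) = ((m-1)+1).choose t * ((m-1) + 1 - t) :=
      Nat.choose_mul_succ_eq (m-1) t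
    have hm1 : m - 1 + 1 = m := by omega
    rw [hm1] at h1
    have hc : ((m-1).choose t : ℝ) * m = (m.choose t : ℝ) * ((m:ℝ) - t) := by
      have h2 := congrArg (Nat.cast (R := ℝ)) h1
      push_cast [Nat.cast_sub ht.le] at h2
      linarith [h2]
    have hne : ((m-1).choose t : ℝ) ≠ 0 := ne_of_gt (choose_pos_cast (by omega))
    have hmt : (m:ℝ) - t ≠ 0 := by
      have : (t:ℝ) < m := by exact_mod_cast ht
      linarith
    field_simp
    linarith [hc]
  | succ b ih =>
    intro m t ht
    have ht' : (t:ℝ) < m := by exact_mod_cast ht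
    have hmb : m + (b+1) - 1 = m + b := by omega
    rw [hmb]
    have ih1 := ih (m+1) (t+1) (by omega)
    have ih2 := ih (m+1) t (by omega)
    have hmb' : m + 1 + b - 1 = m + b := by omega
    rw [hmb'] at ih1 ih2
    push_cast at ih1 ih2
    set S1 : ℝ := ∑ j ∈ range (b+1), ((b.choose j : ℝ)) / ((m+b).choose (t+1+j)) with hS1def
    set S2 : ℝ := ∑ j ∈ range (b+1), ((b.choose j : ℝ)) / ((m+b).choose (t+j)) with hS2def
    have hC1 : ((m+1).choose (t+1) : ℝ) ≠ 0 := ne_of_gt (choose_pos_cast (by omega))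
    have hC2 : ((m+1).choose t : ℝ) ≠ 0 := ne_of_gt (choose_pos_cast (by omega))
    have hmt : (m:ℝ) - t ≠ 0 := by linarith
    have hm1t : (m:ℝ) + 1 - t ≠ 0 := by linarith
    have hm1 : (m:ℝ) + 1 ≠ 0 := by positivity
    have hS1 : ((m+1).choose (t+1) : ℝ) * S1 = ((m:ℝ) + 1 + b) / ((m:ℝ) - t) := by
      rw [hS1def, Finset.mul_sum]
      rw [Finset.sum_congr rfl (fun j _ => by
        rw [mul_div_assoc'] :
        ∀ j ∈ range (b+1), ((m+1).choose (t+1):ℝ) * ((b.choose j:ℝ)/(((m+b).choose (t+1+j) : ℕ):ℝ))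
          = (((m+1).choose (t+1):ℝ) * ((b.choose j : ℕ):ℝ))/(((m+b).choose (t+1+j) : ℕ):ℝ))]
      rw [ih1]
      congr 1
      ring
    have hS2 : ((m+1).choose t : ℝ) * S2 = ((m:ℝ) + 1 + b) / ((m:ℝ) + 1 - t) := by
      rw [hS2def, Finset.mul_sum]
      rw [Finset.sum_congr rfl (fun j _ => by
        rw [mul_div_assoc'] :
        ∀ j ∈ range (b+1), ((m+1).choose t:ℝ) * ((b.choose j:ℝ)/(((m+b).choose (t+j) : ℕ):ℝ))
          = (((m+1).choose t:ℝ) * ((b.choose j : ℕ):ℝ))/(((m+b).choose (t+j) : ℕ):ℝ))]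
      exact ih2
    have hA : ((m:ℝ)+1) * (m.choose t : ℝ) = ((m+1).choose (t+1) : ℝ) * ((t:ℝ)+1) := by
      have h := Nat.add_one_mul_choose_eq m t
      have h2 := congrArg (Nat.cast (R := ℝ)) h
      push_cast at h2
      linarith
    have hB : (m.choose t : ℝ) * ((m:ℝ)+1) = ((m+1).choose t : ℝ) * ((m:ℝ)+1-t) := by
      have h := Nat.choose_mul_succ_eq m t
      have h2 := congrArg (Nat.cast (R := ℝ)) h
      push_cast [Nat.cast_sub (by omega : t ≤ m+1)] at h2
      linarith
    have hCmt1 : (m.choose t : ℝ) = ((m+1).choose (t+1):ℝ) * ((t:ℝ)+1)/((m:ℝ)+1) := by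
      field_simp
      linarith
    have hCmt2 : (m.choose t : ℝ) = ((m+1).choose t:ℝ) * ((m:ℝ)+1-t)/((m:ℝ)+1) := by
      field_simp
      linarith
    have e1 : (m.choose t : ℝ) * S1 = ((t:ℝ)+1)/((m:ℝ)+1) * (((m:ℝ)+1+b)/((m:ℝ)-t)) := by
      rw [hCmt1, ← hS1]; ring
    have e2 : (m.choose t : ℝ) * S2 = (((m:ℝ)+1-t))/((m:ℝ)+1) * (((m:ℝ)+1+b)/(((m:ℝ)+1-t))) := by
      rw [hCmt2, ← hS2]; ring
    have hgoal : ∑ j ∈ Finset.range (b+1+1), ((m.choose t : ℝ) * ((b+1).choose j)) / ((m + b).choose (t + j))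
        = (m.choose t : ℝ) * S2 + (m.choose t : ℝ) * S1 := by
      have hp := pascal_sum b (fun j => (m.choose t : ℝ) / ((m+b).choose (t+j)))
      have hL : ∑ j ∈ Finset.range (b+1+1), ((m.choose t : ℝ) * ((b+1).choose j)) / ((m + b).choose (t + j))
          = ∑ j ∈ range (b+2), ((b+1).choose j : ℝ) * ((m.choose t : ℝ) / ((m+b).choose (t+j))) := by
        refine Finset.sum_congr rfl fun j _ => by ring
      rw [hL, hp]
      congr 1
      · rw [hS2def, Finset.mul_sum]
        refine Finset.sum_congr rfl fun j _ => by ring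
      · rw [hS1def, Finset.mul_sum]
        refine Finset.sum_congr rfl fun j _ => ?_
        have : t + (j+1) = t + 1 + j := by omega
        rw [this]
        ring
    rw [hgoal, e1, e2]
    push_cast
    field_simp
    ring

lemma count_exact {n : ℕ} (A : Finset (Fin n)) (s t : ℕ) (ht : t ≤ s) :
    ((Finset.powersetCard s (Finset.univ : Finset (Fin n))).filter
        (fun S => (S ∩ A).card = t)).card
      = A.card.choose t * Aᶜ.card.choose (s - t) := by
  rw [← Finset.card_powersetCard t A, ← Finset.card_powersetCard (s-t) Aᶜ,
    ← Finset.card_product]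
  apply Finset.card_nbij' (fun S => (S ∩ A, S \ A)) (fun p => p.1 ∪ p.2)
  · intro S hS
    simp only [Finset.mem_coe, Finset.mem_filter, Finset.mem_powersetCard_univ] at hS
    obtain ⟨hcard, hint⟩ := hS
    simp only [Finset.mem_coe, Finset.mem_product, Finset.mem_powersetCard]
    have hsd := Finset.card_inter_add_card_sdiff S A
    refine ⟨⟨Finset.inter_subset_right, hint⟩, ⟨?_, ?_⟩⟩
    · intro x hx
      simp only [Finset.mem_sdiff] at hx
      simp [hx.2]
    · omega
  · intro p hp
    simp only [Finset.mem_coe, Finset.mem_product, Finset.mem_powersetCard] at hp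
    obtain ⟨⟨hB, hBc⟩, hC, hCc⟩ := hp
    have hdisj : Disjoint p.1 p.2 := by
      refine Finset.disjoint_left.mpr fun x hx1 hx2 => ?_
      have := hC hx2
      simp only [Finset.mem_compl] at this
      exact this (hB hx1)
    have hPA : p.1 ∩ A = p.1 := Finset.inter_eq_left.mpr hB
    have hCA : p.2 ∩ A = ∅ := by
      refine Finset.eq_empty_of_forall_notMem fun x hx => ?_
      simp only [Finset.mem_inter] at hx
      have := hC hx.1
      simp only [Finset.mem_compl] at this
      exact this hx.2
    simp only [Finset.mem_coe, Finset.mem_filter, Finset.mem_powersetCard_univ]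
    constructor
    · rw [Finset.card_union_of_disjoint hdisj]; omega
    · rw [Finset.union_inter_distrib_right, hPA, hCA, Finset.union_empty, hBc]
  · intro S hS
    dsimp only
    rw [Finset.union_comm]; exact Finset.sdiff_union_inter S A
  · intro p hp
    simp only [Finset.mem_coe, Finset.mem_product, Finset.mem_powersetCard] at hp
    obtain ⟨⟨hB, hBc⟩, hC, hCc⟩ := hp
    have hPA : p.1 ∩ A = p.1 := Finset.inter_eq_left.mpr hB
    have hCA : p.2 ∩ A = ∅ := by
      refine Finset.eq_empty_of_forall_notMem fun x hx => ?_
      simp only [Finset.mem_inter] at hx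
      have := hC hx.1
      simp only [Finset.mem_compl] at this
      exact this hx.2
    have h1 : (p.1 ∪ p.2) ∩ A = p.1 := by
      rw [Finset.union_inter_distrib_right, hPA, hCA, Finset.union_empty]
    have h2 : (p.1 ∪ p.2) \ A = p.2 := by
      rw [Finset.union_sdiff_distrib]
      have e1 : p.1 \ A = ∅ := Finset.sdiff_eq_empty_iff_subset.mpr hB
      have e2 : p.2 \ A = p.2 := by
        refine Finset.sdiff_eq_self_iff_disjoint.mpr ?_
        refine Finset.disjoint_left.mpr fun x hx1 hx2 => ?_
        have := hC hx1
        simp only [Finset.mem_compl] at this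
        exact this hx2
      rw [e1, e2, Finset.empty_union]
    dsimp only
    rw [h1, h2]

lemma count_exact_zero {n : ℕ} (A : Finset (Fin n)) (s t : ℕ) (ht : s < t) :
    ((Finset.powersetCard s (Finset.univ : Finset (Fin n))).filter
        (fun S => (S ∩ A).card = t)).card = 0 := by
  rw [Finset.card_eq_zero]
  refine Finset.eq_empty_of_forall_notMem fun S hS => ?_
  simp only [Finset.mem_filter, Finset.mem_powersetCard_univ] at hS
  have : (S ∩ A).card ≤ S.card := Finset.card_le_card Finset.inter_subset_left
  omega

lemma colSpan_finrank_le (F : Type*) [Field F] {k n : ℕ}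
    (G : Matrix (Fin k) (Fin n) F) (S : Finset (Fin n)) :
    Module.finrank F (colSpan F G S) ≤ S.card := by
  classical
  have h : colSpan F G S = Submodule.span F ((S.image (fun j => fun i => G i j) : Finset (Fin k → F)) : Set (Fin k → F)) := by
    rw [colSpan, Finset.coe_image]
  rw [h]
  exact le_trans (finrank_span_le_card _) (by
    rw [Finset.toFinset_coe]
    exact Finset.card_image_le)

lemma colSpan_univ_top (F : Type*) [Field F] {k n : ℕ}
    (G : Matrix (Fin k) (Fin n) F) (hrank : G.rank = k) :
    colSpan F G (Finset.univ : Finset (Fin n)) = ⊤ := by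
  have h1 : colSpan F G Finset.univ = Submodule.span F (Set.range G.transpose) := by
    rw [colSpan, Finset.coe_univ, Set.image_univ]
    congr 1
  rw [h1, show Set.range G.transpose = Set.range G.col from rfl, ← Matrix.range_mulVecLin]
  apply Submodule.eq_top_of_finrank_eq
  rw [Module.finrank_fin_fun]
  exact hrank

lemma dim_core {k n : ℕ} {F : Type*} [Field F] (G : Matrix (Fin k) (Fin n) F)
    (V W : Submodule F (Fin k → F)) (d e : ℕ) (hVW : V ⊔ W = ⊤)
    (hW : Module.finrank F W ≤ e) (hde : d + e ≤ k)
    (S A : Finset (Fin n)) (hA : ∀ j, (fun i => G i j) ∉ W → j ∈ A)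
    (hS : V ≤ colSpan F G S) : d ≤ (S ∩ A).card := by
  classical
  have h1 : colSpan F G S ≤ colSpan F G (S ∩ A) ⊔ W := by
    rw [colSpan]
    apply Submodule.span_le.mpr
    rintro v ⟨j, hj, rfl⟩
    simp only [Finset.mem_coe] at hj
    by_cases hw : (fun i => G i j) ∈ W
    · exact Submodule.mem_sup_right hw
    · apply Submodule.mem_sup_left
      apply Submodule.subset_span
      exact ⟨j, by simp [Finset.mem_inter, hj, hA j hw], rfl⟩
  have h2 : colSpan F G (S ∩ A) ⊔ W = ⊤ := by
    rw [eq_top_iff, ← hVW]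
    exact sup_le (le_trans hS (le_trans h1 (by exact sup_le_sup_right le_rfl W)))
      le_sup_right
  have h3 := Submodule.finrank_sup_add_finrank_inf_eq (colSpan F G (S ∩ A)) W
  rw [h2] at h3
  have h4 : Module.finrank F (⊤ : Submodule F (Fin k → F)) = k := by
    rw [finrank_top, Module.finrank_fin_fun]
  have h5 := colSpan_finrank_le F G (S ∩ A)
  omega

lemma harm_eq (n : ℕ) (hn : 1 ≤ n) :
    (n:ℝ) * harm n = ∑ s ∈ range n, ((n.choose s : ℝ)/(((n-1).choose s : ℕ):ℝ)) := by
  have h1 : ∀ s ∈ range n, ((n.choose s : ℝ))/(((n-1).choose s : ℕ):ℝ) = (n:ℝ)/((n:ℝ)-s) := by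
    intro s hs
    have hsn : s < n := mem_range.mp hs
    have hC := Nat.choose_mul_succ_eq (n-1) s
    rw [show n-1+1 = n by omega] at hC
    have hcast := congrArg (Nat.cast (R := ℝ)) hC
    push_cast [Nat.cast_sub hsn.le] at hcast
    have hne : ((n-1).choose s : ℝ) ≠ 0 := ne_of_gt (choose_pos_cast (by omega))
    have hns : (n:ℝ) - s ≠ 0 := by
      have : (s:ℝ) < n := by exact_mod_cast hsn
      linarith
    field_simp
    linarith
  rw [Finset.sum_congr rfl h1]
  rw [← Finset.sum_range_reflect (fun s => (n:ℝ)/((n:ℝ)-s)) n]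
  rw [harm, Finset.mul_sum]
  refine Finset.sum_congr rfl fun j hj => ?_
  have hjn : j < n := mem_range.mp hj
  have : ((n - 1 - j : ℕ) : ℝ) = (n:ℝ) - 1 - j := by
    push_cast [Nat.cast_sub (by omega : j ≤ n - 1), Nat.cast_sub (by omega : 1 ≤ n)]
    ring
  rw [this]
  rw [show (n:ℝ) - ((n:ℝ) - 1 - (j:ℝ)) = (j:ℝ) + 1 by ring]
  ring

lemma master {k n : ℕ} {F : Type*} [Field F] (G : Matrix (Fin k) (Fin n) F)
    (V W : Submodule F (Fin k → F)) (d e : ℕ) (hd : 1 ≤ d)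
    (hVW : V ⊔ W = ⊤) (hW : Module.finrank F W ≤ e) (hde : d + e = k)
    (hrank : G.rank = k) :
    Etime F G V ≥ (n : ℝ) * (d : ℝ) / ((n:ℝ) - (Ncount F G W : ℝ)) := by
  classical
  set A : Finset (Fin n) := Finset.univ.filter (fun j => (fun i => G i j) ∉ W) with hAdef
  set m := A.card with hm
  set b := Aᶜ.card with hb
  have hmbn : m + b = n := by
    rw [hm, hb, Finset.card_add_card_compl, Fintype.card_fin]
  have hN : (Ncount F G W : ℕ) = b := by
    rw [Ncount, Nat.card_eq_fintype_card, Fintype.card_subtype, hb, hAdef]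
    rw [Finset.compl_filter]
    congr 1
    simp
  have hdim : ∀ S : Finset (Fin n), V ≤ colSpan F G S → d ≤ (S ∩ A).card := by
    intro S hS
    exact dim_core G V W d e hVW hW (le_of_eq hde) S A
      (fun j hj => by simp [hAdef, hj]) hS
  have hdm : d ≤ m := by
    have h := hdim Finset.univ (by rw [colSpan_univ_top F G hrank]; exact le_top)
    rwa [Finset.univ_inter] at h
  have hn : 1 ≤ n := by omega
  set β : ℕ → ℕ := fun s => ((Finset.powersetCard s (Finset.univ : Finset (Fin n))).filter
    (fun S => ¬ (S ∩ A).card < d)).card with hβdef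
  set γ : ℕ → ℕ := fun s => ((Finset.powersetCard s (Finset.univ : Finset (Fin n))).filter
    (fun S => (S ∩ A).card < d)).card with hγdef
  have hβγ : ∀ s, γ s + β s = n.choose s := by
    intro s
    rw [hγdef, hβdef, Finset.card_filter_add_card_filter_not,
      Finset.card_powersetCard, Finset.card_univ, Fintype.card_fin]
  have halpha : ∀ s, alphaCount F G V s ≤ β s := by
    intro s
    rw [alphaCount, Nat.card_eq_fintype_card, Fintype.card_subtype]
    apply Finset.card_le_card
    intro S hS
    simp only [Finset.mem_filter, Finset.mem_univ, true_and] at hS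
    simp only [hβdef, Finset.mem_filter, Finset.mem_powersetCard_univ, not_lt]
    exact ⟨hS.1, hdim S hS.2⟩
  have hstep1 : Etime F G V ≥ (n:ℝ)*harm n - ∑ s ∈ range n, (β s : ℝ)/(((n-1).choose s : ℕ):ℝ) := by
    rw [Etime]
    have h1 : ∑ s ∈ Finset.Icc 1 (n-1), (alphaCount F G V s : ℝ)/(((n-1).choose s:ℕ):ℝ)
        ≤ ∑ s ∈ Finset.Icc 1 (n-1), (β s : ℝ)/(((n-1).choose s:ℕ):ℝ) := by
      apply Finset.sum_le_sum
      intro s hs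
      gcongr
      exact_mod_cast halpha s
    have h2 : ∑ s ∈ Finset.Icc 1 (n-1), (β s : ℝ)/(((n-1).choose s:ℕ):ℝ)
        ≤ ∑ s ∈ range n, (β s : ℝ)/(((n-1).choose s:ℕ):ℝ) := by
      apply Finset.sum_le_sum_of_subset_of_nonneg
      · intro s hs
        simp only [Finset.mem_Icc] at hs
        exact Finset.mem_range.mpr (by omega)
      · intro s _ _; positivity
    linarith
  have hstep2 : (n:ℝ)*harm n - ∑ s ∈ range n, (β s:ℝ)/(((n-1).choose s:ℕ):ℝ)
      = ∑ s ∈ range n, (γ s : ℝ)/(((n-1).choose s:ℕ):ℝ) := by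
    rw [harm_eq n hn, ← Finset.sum_sub_distrib]
    refine Finset.sum_congr rfl fun s hs => ?_
    rw [div_sub_div_same]
    congr 1
    have h := hβγ s
    have h2 : ((γ s : ℕ):ℝ) + ((β s : ℕ):ℝ) = (n.choose s : ℝ) := by exact_mod_cast congrArg (Nat.cast (R := ℝ)) h
    linarith
  have hγsumN : ∀ s, γ s = ∑ t ∈ range d,
      ((Finset.powersetCard s (Finset.univ : Finset (Fin n))).filter
        (fun S => (S ∩ A).card = t)).card := by
    intro s
    simp only [hγdef]
    rw [Finset.card_eq_sum_card_fiberwise (f := fun S => (S ∩ A).card) (t := range d)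
      (fun S hS => Finset.mem_range.mpr (Finset.mem_filter.mp hS).2)]
    refine Finset.sum_congr rfl fun t htl => ?_
    rw [Finset.filter_filter]
    congr 1
    apply Finset.filter_congr
    intro S hS
    have htd := Finset.mem_range.mp htl
    show ((S ∩ A).card < d ∧ (S ∩ A).card = t) ↔ ((S ∩ A).card = t)
    omega
  have hinner : ∀ t ∈ range d,
      ∑ s ∈ range n, ((((Finset.powersetCard s (Finset.univ : Finset (Fin n))).filter
          (fun S => (S ∩ A).card = t)).card : ℝ))/(((n-1).choose s : ℕ):ℝ)
        = (n:ℝ)/((m:ℝ) - t) := by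
    intro t htr
    have htd : t < d := Finset.mem_range.mp htr
    have htm : t < m := lt_of_lt_of_le htd hdm
    have hsub : Finset.Ico t (t+b+1) ⊆ range n := by
      intro s hs
      simp only [Finset.mem_Ico] at hs
      exact Finset.mem_range.mpr (by omega)
    have hvan : ∀ s ∈ range n, s ∉ Finset.Ico t (t+b+1) →
        ((((Finset.powersetCard s (Finset.univ : Finset (Fin n))).filter
          (fun S => (S ∩ A).card = t)).card : ℝ))/(((n-1).choose s : ℕ):ℝ) = 0 := by
      intro s hs hns
      simp only [Finset.mem_Ico, not_and, not_lt] at hns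
      by_cases hst : s < t
      · rw [count_exact_zero A s t hst]
        simp
      · push_neg at hst
        have hsge := hns hst
        rw [count_exact A s t hst]
        rw [Nat.choose_eq_zero_of_lt (show b < s - t by omega)]
        simp
    rw [← Finset.sum_subset hsub hvan]
    rw [Finset.sum_Ico_eq_sum_range]
    rw [show t+b+1-t = b+1 from by omega]
    have hkey := key_identity b m t htm
    rw [show m+b-1 = n-1 from by omega] at hkey
    have hmbcast : ((m:ℝ)+(b:ℝ)) = (n:ℝ) := by exact_mod_cast congrArg (Nat.cast (R := ℝ)) hmbn
    rw [hmbcast] at hkey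
    rw [← hkey]
    refine Finset.sum_congr rfl fun j hj => ?_
    congr 1
    rw [count_exact A (t+j) t (by omega)]
    rw [show t+j-t = j from by omega]
    push_cast
    ring
  have hmain : ∑ s ∈ range n, (γ s:ℝ)/(((n-1).choose s:ℕ):ℝ)
      = ∑ t ∈ range d, (n:ℝ)/((m:ℝ)-t) := by
    have h1 : ∀ s ∈ range n, (γ s:ℝ)/(((n-1).choose s:ℕ):ℝ)
        = ∑ t ∈ range d, ((((Finset.powersetCard s (Finset.univ : Finset (Fin n))).filter
            (fun S => (S ∩ A).card = t)).card : ℝ))/(((n-1).choose s:ℕ):ℝ) := by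
      intro s _
      rw [hγsumN s]
      push_cast
      rw [Finset.sum_div]
    rw [Finset.sum_congr rfl h1, Finset.sum_comm]
    exact Finset.sum_congr rfl hinner
  have hfinal : ∑ t ∈ range d, (n:ℝ)/((m:ℝ)-t) ≥ (d:ℝ) * ((n:ℝ)/(m:ℝ)) := by
    have hle : ∀ t ∈ range d, (n:ℝ)/(m:ℝ) ≤ (n:ℝ)/((m:ℝ)-t) := by
      intro t htr
      have htm : t < m := lt_of_lt_of_le (Finset.mem_range.mp htr) hdm
      have h1 : (0:ℝ) < (m:ℝ) - t := by
        have : (t:ℝ) < m := by exact_mod_cast htm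
        linarith
      have h2 : (0:ℝ) ≤ (t:ℝ) := Nat.cast_nonneg t
      exact div_le_div_of_nonneg_left (Nat.cast_nonneg n) h1 (by linarith)
    have := Finset.sum_le_sum hle
    rw [Finset.sum_const, Finset.card_range] at this
    calc ∑ t ∈ range d, (n:ℝ)/((m:ℝ)-t) ≥ d • ((n:ℝ)/(m:ℝ)) := this
    _ = (d:ℝ) * ((n:ℝ)/(m:ℝ)) := by rw [nsmul_eq_mul]
  have hNm : (n:ℝ) - (Ncount F G W : ℝ) = (m:ℝ) := by
    rw [hN]
    have h2 : ((m:ℝ)+(b:ℝ)) = (n:ℝ) := by exact_mod_cast congrArg (Nat.cast (R := ℝ)) hmbn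
    linarith
  rw [hNm]
  have heq : (n:ℝ)*(d:ℝ)/(m:ℝ) = (d:ℝ)*((n:ℝ)/(m:ℝ)) := by ring
  rw [heq]
  linarith [hstep1, hstep2, hmain, hfinal]

lemma file1_finrank_le (F : Type*) [Field F] (k s1 : ℕ) :
    Module.finrank F (file1 F k s1) ≤ s1 := by
  classical
  have hset : {v : Fin k → F | ∃ i : Fin k, (i : ℕ) < s1 ∧ v = Pi.single i 1}
      = ↑((Finset.univ.filter (fun i : Fin k => (i:ℕ) < s1)).image
          (fun i => (Pi.single i 1 : Fin k → F))) := by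
    ext v
    simp only [Set.mem_setOf_eq, Finset.coe_image, Set.mem_image, Finset.mem_coe,
      Finset.mem_filter, Finset.mem_univ, true_and]
    constructor
    · rintro ⟨i, hi, rfl⟩; exact ⟨i, hi, rfl⟩
    · rintro ⟨i, hi, rfl⟩; exact ⟨i, hi, rfl⟩
  rw [file1, hset]
  refine le_trans (finrank_span_le_card _) ?_
  rw [Finset.toFinset_coe]
  refine le_trans Finset.card_image_le ?_
  have h := Finset.card_le_card_of_injOn (fun i : Fin k => (i:ℕ))
    (s := Finset.univ.filter (fun i : Fin k => (i:ℕ) < s1))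
    (t := Finset.range s1)
    (fun i hi => by
      simp only [Finset.mem_coe, Finset.mem_filter, Finset.mem_univ, true_and] at hi
      exact Finset.mem_range.mpr hi)
    (fun i _ j _ hij => Fin.val_injective hij)
  rw [Finset.card_range] at h
  exact h

lemma file2_finrank_le (F : Type*) [Field F] (k s1 : ℕ) :
    Module.finrank F (file2 F k s1) ≤ k - s1 := by
  classical
  have hset : {v : Fin k → F | ∃ i : Fin k, s1 ≤ (i : ℕ) ∧ v = Pi.single i 1}
      = ↑((Finset.univ.filter (fun i : Fin k => s1 ≤ (i:ℕ))).image
          (fun i => (Pi.single i 1 : Fin k → F))) := by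
    ext v
    simp only [Set.mem_setOf_eq, Finset.coe_image, Set.mem_image, Finset.mem_coe,
      Finset.mem_filter, Finset.mem_univ, true_and]
    constructor
    · rintro ⟨i, hi, rfl⟩; exact ⟨i, hi, rfl⟩
    · rintro ⟨i, hi, rfl⟩; exact ⟨i, hi, rfl⟩
  rw [file2, hset]
  refine le_trans (finrank_span_le_card _) ?_
  rw [Finset.toFinset_coe]
  refine le_trans Finset.card_image_le ?_
  have h := Finset.card_le_card_of_injOn (fun i : Fin k => (i:ℕ) - s1)
    (s := Finset.univ.filter (fun i : Fin k => s1 ≤ (i:ℕ)))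
    (t := Finset.range (k - s1))
    (fun i hi => by
      simp only [Finset.mem_coe, Finset.mem_filter, Finset.mem_univ, true_and] at hi
      have hik := i.isLt
      exact Finset.mem_range.mpr (show (i:ℕ) - s1 < k - s1 by omega))
    (fun i hi j hj hij => by
      simp only [Finset.coe_filter, Set.mem_setOf_eq, Finset.mem_univ, true_and] at hi hj
      simp only at hij
      apply Fin.val_injective
      omega)
  rw [Finset.card_range] at h
  exact h

lemma file_sup_top (F : Type*) [Field F] (k s1 : ℕ) :
    file1 F k s1 ⊔ file2 F k s1 = ⊤ := by
  classical
  rw [file1, file2, ← Submodule.span_union, eq_top_iff,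
    ← Module.Basis.span_eq (Pi.basisFun F (Fin k))]
  apply Submodule.span_mono
  rintro v ⟨i, rfl⟩
  rw [Pi.basisFun_apply]
  by_cases h : (i:ℕ) < s1
  · exact Or.inl ⟨i, h, rfl⟩
  · exact Or.inr ⟨i, by omega, rfl⟩

/-- Projection lower bound: `E_i(G) ≥ n·s_i/(n − N(F_{3−i}))`, where `N(F_{3−i})` is
the number of columns of `G` lying in the other file subspace. -/
theorem stmt8 (q k n s1 s2 : ℕ) (hq : IsPrimePow q)
    (F : Type*) [Field F] [Fintype F] (hF : Fintype.card F = q)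
    (G : Matrix (Fin k) (Fin n) F) (hrank : G.rank = k)
    (hs1 : 1 ≤ s1) (hs2 : 1 ≤ s2) (hk : s1 + s2 = k) :
    Etime F G (file1 F k s1) ≥
        (n : ℝ) * (s1 : ℝ) / ((n : ℝ) - (Ncount F G (file2 F k s1) : ℝ)) ∧
      Etime F G (file2 F k s1) ≥
        (n : ℝ) * (s2 : ℝ) / ((n : ℝ) - (Ncount F G (file1 F k s1) : ℝ)) := by
  constructor
  · have h2 : Module.finrank F (file2 F k s1) ≤ s2 := by
      have := file2_finrank_le F k s1
      omega
    exact master G (file1 F k s1) (file2 F k s1) s1 s2 hs1 (file_sup_top F k s1) h2 hk hrank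
  · have h1 : Module.finrank F (file1 F k s1) ≤ s1 := file1_finrank_le F k s1
    have hsup : file2 F k s1 ⊔ file1 F k s1 = ⊤ := by
      rw [sup_comm]; exact file_sup_top F k s1
    exact master G (file2 F k s1) (file1 F k s1) s2 s1 hs2 hsup h1 (by omega) hrank
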